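/- Let X : Ω₁ → Ω₂ be a C² diffeomorphism between bounded open subsets of ℝⁿ, A(x) := |det DX(x)| (DX(x))⁻¹ (DX(x))⁻ᵀ, κ > 0, σ ≥ 0, and u ∈ C²(Ω₁) ∩ H²(Ω₁). Then ∫_{Ω₂} κ (Δ(u∘X⁻¹))² + σ |∇(u∘X⁻¹)|² dx = ∫_{Ω₁} κ (div(A∇u))² / |det DX| + σ (∇u)ᵀ A ∇u dx. -/

import Mathlib

open Matrix MeasureTheory Finset

section PartA

variable {E : Type*} [NormedAddCommGroup E] [NormedSpace ℝ E] {n : ℕ}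

lemma adjugate_eq_det_updateColumn (A : Matrix (Fin n) (Fin n) ℝ) (i j : Fin n) :
    A.adjugate i j = (A.updateCol i (Pi.single j 1)).det := by
  rw [show A.adjugate i j = (A.adjugate)ᵀ j i from rfl, Matrix.adjugate_transpose,
    Matrix.adjugate_apply, ← Matrix.det_transpose, Matrix.updateRow_transpose,
    Matrix.transpose_transpose]

lemma det_updateColumn_perm_sum (M : Matrix (Fin n) (Fin n) ℝ) (k : Fin n) (v : Fin n → ℝ) :
    (M.updateCol k v).det
      = ∑ σ : Equiv.Perm (Fin n),
          ((Equiv.Perm.sign σ : ℤ) : ℝ) * (v (σ k) * ∏ i ∈ univ.erase k, M (σ i) i) := by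
  rw [Matrix.det_apply']
  refine Finset.sum_congr rfl fun σ _ => ?_
  have h : (fun i => (M.updateCol k v) (σ i) i)
      = Function.update (fun i => M (σ i) i) k (v (σ k)) := by
    funext i
    rw [Matrix.updateCol_apply, Function.update_apply]
    rcases eq_or_ne i k with rfl | h
    · simp
    · simp [h]
  rw [show (∏ i, (M.updateCol k v) (σ i) i)
      = ∏ i, Function.update (fun i => M (σ i) i) k (v (σ k)) i from by rw [h],
    Finset.prod_update_of_mem (Finset.mem_univ k)]
  rw [Finset.sdiff_singleton_eq_erase]

/-- Derivative of the determinant of a matrix-valued function, entrywise form. -/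
lemma det_hasFDerivAt' {M : E → Matrix (Fin n) (Fin n) ℝ} {M' : Fin n → Fin n → E →L[ℝ] ℝ}
    {x : E} (h : ∀ p q, HasFDerivAt (fun z => M z p q) (M' p q) x) :
    HasFDerivAt (fun z => (M z).det)
      (∑ σ : Equiv.Perm (Fin n), ((Equiv.Perm.sign σ : ℤ) : ℝ) •
        ∑ k, (∏ i ∈ univ.erase k, M x (σ i) i) • M' (σ k) k) x := by
  have : ∀ z : E, (M z).det
      = ∑ σ : Equiv.Perm (Fin n), ((Equiv.Perm.sign σ : ℤ) : ℝ) * ∏ i, M z (σ i) i :=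
    fun z => Matrix.det_apply' (M z)
  simp only [this]
  apply HasFDerivAt.fun_sum
  intro σ _
  exact (HasFDerivAt.finset_prod (fun i _ => h (σ i) i)).const_mul _

lemma det_deriv_apply {M : E → Matrix (Fin n) (Fin n) ℝ} {M' : Fin n → Fin n → E →L[ℝ] ℝ}
    {x : E} (e : E) :
    (∑ σ : Equiv.Perm (Fin n), ((Equiv.Perm.sign σ : ℤ) : ℝ) •
        ∑ k, (∏ i ∈ univ.erase k, M x (σ i) i) • M' (σ k) k) e
      = ∑ k, ((M x).updateCol k (fun p => M' p k e)).det := by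
  simp only [Finset.smul_sum, ContinuousLinearMap.sum_apply, ContinuousLinearMap.smul_apply]
  rw [Finset.sum_comm]
  refine Finset.sum_congr rfl fun k _ => ?_
  rw [det_updateColumn_perm_sum]
  refine Finset.sum_congr rfl fun σ _ => ?_
  simp [smul_eq_mul]
  ring

end PartA

section Piola

variable {E : Type*} [NormedAddCommGroup E] [NormedSpace ℝ E] {n : ℕ}

lemma piola {F : E → Matrix (Fin n) (Fin n) ℝ} {F' : Fin n → Fin n → E →L[ℝ] ℝ} {x : E}
    (h : ∀ p q, HasFDerivAt (fun z => F z p q) (F' p q) x)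
    (e : Fin n → E)
    (hsymm : ∀ p q i, F' p q (e i) = F' p i (e q)) (j : Fin n) :
    ∑ i, fderiv ℝ (fun z => (F z).adjugate i j) x (e i) = 0 := by
  classical
  set T : Fin n → Fin n → ℝ := fun i k =>
    (((F x).updateCol i (Pi.single j 1)).updateCol k (fun p => F' p k (e i))).det with hT
  have key : ∀ i : Fin n, fderiv ℝ (fun z => (F z).adjugate i j) x (e i)
      = ∑ k ∈ univ.erase i, T i k := by
    intro i
    have hentry : ∀ p q, HasFDerivAt (fun z => ((F z).updateCol i (Pi.single j 1)) p q)
        ((if q = i then (0 : E →L[ℝ] ℝ) else F' p q)) x := by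
      intro p q
      rcases eq_or_ne q i with rfl | hq
      · simp only [Matrix.updateCol_apply, if_pos rfl]
        exact hasFDerivAt_const _ _
      · simp only [Matrix.updateCol_apply, if_neg hq]
        exact h p q
    have hadj : (fun z => (F z).adjugate i j)
        = fun z => ((F z).updateCol i (Pi.single j 1)).det := by
      funext z; exact adjugate_eq_det_updateColumn _ i j
    rw [hadj, (det_hasFDerivAt' hentry).fderiv,
      det_deriv_apply (M := fun z => (F z).updateCol i (Pi.single j 1))
        (M' := fun p q => if q = i then (0 : E →L[ℝ] ℝ) else F' p q) (e i),
      ← Finset.add_sum_erase _ _ (Finset.mem_univ i)]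
    have h0 : ((((F x).updateCol i (Pi.single j 1)).updateCol i
        (fun p => (if (i : Fin n) = i then (0 : E →L[ℝ] ℝ) else F' p i) (e i))).det) = 0 := by
      apply Matrix.det_eq_zero_of_column_eq_zero i
      intro p
      simp
    rw [h0, zero_add]
    refine Finset.sum_congr rfl fun k hk => ?_
    have hki : k ≠ i := (Finset.mem_erase.1 hk).1
    simp only [if_neg hki, hT]
  have hanti : ∀ i k : Fin n, i ≠ k → T k i = - T i k := by
    intro i k hik
    have hmat : ((F x).updateCol k (Pi.single j 1)).updateCol i (fun p => F' p i (e k))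
        = (((F x).updateCol i (Pi.single j 1)).updateCol k
            (fun p => F' p k (e i))).submatrix id (Equiv.swap i k) := by
      ext p q
      simp only [Matrix.submatrix_apply, id_eq, Matrix.updateCol_apply]
      rcases eq_or_ne q i with rfl | hqi
      · simp only [Equiv.swap_apply_left, if_pos rfl]
        exact hsymm _ _ _
      · rcases eq_or_ne q k with rfl | hqk
        · simp [Equiv.swap_apply_right, hqi, hik, Ne.symm hqi, Ne.symm hik]
        · simp [Equiv.swap_apply_of_ne_of_ne hqi hqk, hqi, hqk]
    rw [hT]
    simp only []
    rw [hmat, Matrix.det_permute', Equiv.Perm.sign_swap hik]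
    simp
  have hS : (∑ i, ∑ k ∈ univ.erase i, T i k) = - ∑ i, ∑ k ∈ univ.erase i, T i k := by
    calc (∑ i, ∑ k ∈ univ.erase i, T i k)
        = ∑ i, ∑ k ∈ univ.erase i, -(T k i) := by
          refine Finset.sum_congr rfl fun i _ => Finset.sum_congr rfl fun k hk => ?_
          have hki : k ≠ i := (Finset.mem_erase.1 hk).1
          rw [← hanti k i hki]
      _ = - ∑ i, ∑ k ∈ univ.erase i, T k i := by rw [← Finset.sum_neg_distrib]; simp
      _ = - ∑ k, ∑ i ∈ univ.erase k, T k i := by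
          congr 1
          refine Finset.sum_comm' fun a b => ?_
          simp [Finset.mem_erase, ne_comm, and_comm]
  have hS0 : (∑ i, ∑ k ∈ univ.erase i, T i k) = 0 := by linarith
  simp only [key]
  exact hS0

end Piola

section PartB

variable {n : ℕ} {G : Type*} [NormedAddCommGroup G] [NormedSpace ℝ G]

lemma euclid_eq_sum_single (w : EuclideanSpace ℝ (Fin n)) :
    w = ∑ k, w k • EuclideanSpace.single k (1 : ℝ) := by
  ext j
  rw [show (∑ k, w k • EuclideanSpace.single k (1 : ℝ)) j
      = ∑ k, (w k • EuclideanSpace.single k (1 : ℝ)) j from by rw [WithLp.ofLp_sum, Finset.sum_apply]]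
  simp [EuclideanSpace.single_apply]

lemma clm_apply_eq_sum (L : EuclideanSpace ℝ (Fin n) →L[ℝ] G) (w : EuclideanSpace ℝ (Fin n)) :
    L w = ∑ k, w k • L (EuclideanSpace.single k 1) := by
  conv_lhs => rw [euclid_eq_sum_single w, map_sum]
  exact Finset.sum_congr rfl fun k _ => by rw [L.map_smul]

lemma clm_apply_eq_sum' (L : EuclideanSpace ℝ (Fin n) →L[ℝ] ℝ) (w : EuclideanSpace ℝ (Fin n)) :
    L w = ∑ k, w k * L (EuclideanSpace.single k 1) := by
  rw [clm_apply_eq_sum]; rfl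

lemma norm_gradient_sq {g : EuclideanSpace ℝ (Fin n) → ℝ} {y : EuclideanSpace ℝ (Fin n)}
    (h : DifferentiableAt ℝ g y) :
    ‖gradient g y‖ ^ 2 = ∑ i, (fderiv ℝ g y (EuclideanSpace.single i 1)) ^ 2 := by
  have hg : ∀ v, fderiv ℝ g y v = inner ℝ (gradient g y) v := by
    intro v
    have h1 : HasGradientAt g (gradient g y) y := h.hasGradientAt
    rw [hasGradientAt_iff_hasFDerivAt] at h1
    rw [h1.fderiv]
    simp [InnerProductSpace.toDual_apply_apply]
  have hcoord : ∀ i, fderiv ℝ g y (EuclideanSpace.single i 1) = gradient g y i := by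
    intro i
    rw [hg]
    simp only [EuclideanSpace.inner_single_right]
    simp
  simp only [hcoord]
  rw [EuclideanSpace.norm_eq]
  rw [Real.sq_sqrt (by positivity)]
  exact Finset.sum_congr rfl fun i _ => by rw [Real.norm_eq_abs, sq_abs]

end PartB
lemma quad_form_eq {n : ℕ} (c : ℝ) (M : Matrix (Fin n) (Fin n) ℝ) (p : Fin n → ℝ) :
    p ⬝ᵥ (c • (M * Mᵀ)).mulVec p = c * ∑ i, (∑ k, M k i * p k) ^ 2 := by
  simp only [Matrix.smul_mulVec, dotProduct_smul, smul_eq_mul]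
  congr 1
  simp only [dotProduct, Matrix.mulVec, Matrix.mul_apply, Matrix.transpose_apply,
    Finset.sum_mul, Finset.mul_sum, sq]
  calc (∑ x : Fin n, ∑ x1 : Fin n, ∑ i : Fin n, p x * (M x i * M x1 i * p x1))
      = ∑ x : Fin n, ∑ i : Fin n, ∑ x1 : Fin n, p x * (M x i * M x1 i * p x1) :=
        Finset.sum_congr rfl fun x _ => Finset.sum_comm
    _ = ∑ i : Fin n, ∑ x : Fin n, ∑ x1 : Fin n, p x * (M x i * M x1 i * p x1) :=
        Finset.sum_comm
    _ = _ := Finset.sum_congr rfl fun i _ => Finset.sum_congr rfl fun x _ =>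
        Finset.sum_congr rfl fun j _ => by ring

section Extra
variable {E : Type*} [NormedAddCommGroup E] [NormedSpace ℝ E] {n : ℕ}

lemma adjugate_entry_differentiable {F : E → Matrix (Fin n) (Fin n) ℝ}
    {F' : Fin n → Fin n → E →L[ℝ] ℝ} {x : E}
    (h : ∀ p q, HasFDerivAt (fun z => F z p q) (F' p q) x) (i j : Fin n) :
    DifferentiableAt ℝ (fun z => (F z).adjugate i j) x := by
  classical
  have hentry : ∀ p q, HasFDerivAt (fun z => ((F z).updateCol i (Pi.single j 1)) p q)
      ((if q = i then (0 : E →L[ℝ] ℝ) else F' p q)) x := by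
    intro p q
    rcases eq_or_ne q i with rfl | hq
    · simp only [Matrix.updateCol_apply, if_pos rfl]
      exact hasFDerivAt_const _ _
    · simp only [Matrix.updateCol_apply, if_neg hq]
      exact h p q
  have hadj : (fun z => (F z).adjugate i j)
      = fun z => ((F z).updateCol i (Pi.single j 1)).det := by
    funext z; exact adjugate_eq_det_updateColumn _ i j
  rw [hadj]
  exact (det_hasFDerivAt' hentry).differentiableAt

end Extra

lemma clm_coord_sum {n : ℕ}
    (L : EuclideanSpace ℝ (Fin n) →L[ℝ] EuclideanSpace ℝ (Fin n))
    (w : EuclideanSpace ℝ (Fin n)) (p : Fin n) :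
    (L w) p = ∑ k, w k * (L (EuclideanSpace.single k 1)) p := by
  rw [clm_apply_eq_sum L w,
    show ((∑ k, w k • L (EuclideanSpace.single k 1)) p)
      = ∑ k, (w k • L (EuclideanSpace.single k 1)) p from by rw [WithLp.ofLp_sum, Finset.sum_apply]]
  rfl

/-- Transformation of the linearized Canham--Helfrich energy under a `C²` diffeomorphism:
`∫_{Ω₂} κ (Δ(u∘X⁻¹))² + σ |∇(u∘X⁻¹)|² = ∫_{Ω₁} κ (div(A∇u))²/|det DX| + σ (∇u)ᵀ A ∇u`
with `A = |det DX| (DX)⁻¹ (DX)⁻ᵀ`. -/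
theorem helfrich_energy_transformation
    {n : ℕ} (Ω₁ Ω₂ : Set (EuclideanSpace ℝ (Fin n)))
    (hΩ₁ : IsOpen Ω₁) (hΩ₂ : IsOpen Ω₂)
    (hb₁ : Bornology.IsBounded Ω₁) (hb₂ : Bornology.IsBounded Ω₂)
    (X Xinv : EuclideanSpace ℝ (Fin n) → EuclideanSpace ℝ (Fin n))
    (hX : ContDiffOn ℝ 2 X Ω₁) (hXinv : ContDiffOn ℝ 2 Xinv Ω₂)
    (hXmaps : Set.MapsTo X Ω₁ Ω₂) (hXinvmaps : Set.MapsTo Xinv Ω₂ Ω₁)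
    (hleft : ∀ x ∈ Ω₁, Xinv (X x) = x) (hright : ∀ y ∈ Ω₂, X (Xinv y) = y)
    (κ σ : ℝ) (hκ : 0 < κ) (hσ : 0 ≤ σ)
    (u : EuclideanSpace ℝ (Fin n) → ℝ) (hu : ContDiffOn ℝ 2 u Ω₁)
    (DX : EuclideanSpace ℝ (Fin n) → Matrix (Fin n) (Fin n) ℝ)
    (hDX : ∀ x ∈ Ω₁, ∀ i j, DX x i j = fderiv ℝ X x (EuclideanSpace.single j 1) i)
    (A : EuclideanSpace ℝ (Fin n) → Matrix (Fin n) (Fin n) ℝ)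
    (hA : ∀ x ∈ Ω₁, A x = |(DX x).det| • ((DX x)⁻¹ * ((DX x)⁻¹)ᵀ)) :
    (∫ y in Ω₂,
        (κ * (∑ i, fderiv ℝ (fun z => fderiv ℝ (u ∘ Xinv) z (EuclideanSpace.single i 1)) y
            (EuclideanSpace.single i 1)) ^ 2
          + σ * ‖gradient (u ∘ Xinv) y‖ ^ 2))
      = ∫ x in Ω₁,
          (κ * (∑ i, fderiv ℝ
                (fun z => (A z).mulVec (fun j => fderiv ℝ u z (EuclideanSpace.single j 1)) i)
                x (EuclideanSpace.single i 1)) ^ 2 / |(DX x).det|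
            + σ * ((fun i => fderiv ℝ u x (EuclideanSpace.single i 1)) ⬝ᵥ
                (A x).mulVec (fun j => fderiv ℝ u x (EuclideanSpace.single j 1)))) := by
  classical
  have hXd : ∀ z ∈ Ω₁, DifferentiableAt ℝ X z := fun z hz =>
    (hX.contDiffAt (hΩ₁.mem_nhds hz)).differentiableAt two_ne_zero
  have hXinvd : ∀ y ∈ Ω₂, DifferentiableAt ℝ Xinv y := fun y hy =>
    (hXinv.contDiffAt (hΩ₂.mem_nhds hy)).differentiableAt two_ne_zero
  have hud : ∀ z ∈ Ω₁, DifferentiableAt ℝ u z := fun z hz =>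
    (hu.contDiffAt (hΩ₁.mem_nhds hz)).differentiableAt two_ne_zero
  have hv : ContDiffOn ℝ 2 (u ∘ Xinv) Ω₂ := hu.comp hXinv hXinvmaps
  have hvd : ∀ y ∈ Ω₂, DifferentiableAt ℝ (u ∘ Xinv) y := fun y hy =>
    (hv.contDiffAt (hΩ₂.mem_nhds hy)).differentiableAt two_ne_zero
  -- chain rule identities
  have hchain1 : ∀ z ∈ Ω₁,
      (fderiv ℝ Xinv (X z)).comp (fderiv ℝ X z)
        = ContinuousLinearMap.id ℝ (EuclideanSpace ℝ (Fin n)) := by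
    intro z hz
    have h1 : Xinv ∘ X =ᶠ[nhds z] id :=
      Filter.eventuallyEq_of_mem (hΩ₁.mem_nhds hz) fun a ha => hleft a ha
    rw [← fderiv_comp z (hXinvd _ (hXmaps hz)) (hXd z hz), h1.fderiv_eq, fderiv_id]
  have hchain2 : ∀ z ∈ Ω₁,
      (fderiv ℝ X z).comp (fderiv ℝ Xinv (X z))
        = ContinuousLinearMap.id ℝ (EuclideanSpace ℝ (Fin n)) := by
    intro z hz
    have h1 : X ∘ Xinv =ᶠ[nhds (X z)] id :=
      Filter.eventuallyEq_of_mem (hΩ₂.mem_nhds (hXmaps hz)) fun a ha => hright a ha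
    have h2 := fderiv_comp (X z) (hXd _ (hXinvmaps (hXmaps hz))) (hXinvd _ (hXmaps hz))
    rw [hleft z hz] at h2
    rw [← h2, h1.fderiv_eq, fderiv_id]
  -- the inverse matrix
  set Mm : EuclideanSpace ℝ (Fin n) → Matrix (Fin n) (Fin n) ℝ :=
    fun z => Matrix.of fun p q => fderiv ℝ Xinv (X z) (EuclideanSpace.single q 1) p with hMm
  have hFM : ∀ z ∈ Ω₁, DX z * Mm z = 1 := by
    intro z hz
    ext p q
    rw [Matrix.mul_apply, Matrix.one_apply]
    have : ∑ k, DX z p k * Mm z k q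
        = ((fderiv ℝ X z) ((fderiv ℝ Xinv (X z)) (EuclideanSpace.single q 1))) p := by
      rw [clm_coord_sum]
      exact Finset.sum_congr rfl fun k _ => by
        rw [hDX z hz p k, mul_comm]
        rfl
    rw [this, ← ContinuousLinearMap.comp_apply, hchain2 z hz]
    simp [EuclideanSpace.single_apply, eq_comm]
  have hMF : ∀ z ∈ Ω₁, Mm z * DX z = 1 := by
    intro z hz
    ext p q
    rw [Matrix.mul_apply, Matrix.one_apply]
    have : ∑ k, Mm z p k * DX z k q
        = ((fderiv ℝ Xinv (X z)) ((fderiv ℝ X z) (EuclideanSpace.single q 1))) p := by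
      rw [clm_coord_sum]
      exact Finset.sum_congr rfl fun k _ => by
        rw [hDX z hz k q, mul_comm]
        rfl
    rw [this, ← ContinuousLinearMap.comp_apply, hchain1 z hz]
    simp [EuclideanSpace.single_apply, eq_comm]
  have hdetz : ∀ z ∈ Ω₁, (DX z).det ≠ 0 := by
    intro z hz
    have h1 := congrArg Matrix.det (hFM z hz)
    rw [Matrix.det_mul, Matrix.det_one] at h1
    exact left_ne_zero_of_mul_eq_one h1
  have hMinv : ∀ z ∈ Ω₁, (DX z)⁻¹ = Mm z := fun z hz => Matrix.inv_eq_right_inv (hFM z hz)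
  have hadjeq : ∀ z ∈ Ω₁, (DX z).adjugate = (DX z).det • Mm z := by
    intro z hz
    rw [← hMinv z hz, Matrix.inv_def, smul_smul, Ring.inverse_eq_inv',
      mul_inv_cancel₀ (hdetz z hz), one_smul]
  -- derivative of u ∘ Xinv in terms of Mm
  have hw : ∀ z ∈ Ω₁, ∀ j, fderiv ℝ (u ∘ Xinv) (X z) (EuclideanSpace.single j 1)
      = ∑ k, Mm z k j * fderiv ℝ u z (EuclideanSpace.single k 1) := by
    intro z hz j
    have h2 := fderiv_comp (X z) (by rw [hleft z hz]; exact hud z hz) (hXinvd _ (hXmaps hz))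
    rw [hleft z hz] at h2
    rw [h2, ContinuousLinearMap.comp_apply, clm_apply_eq_sum']
    rfl
  -- determinant transfer
  have hdet_transfer : ∀ z ∈ Ω₁, (fderiv ℝ X z).det = (DX z).det := by
    intro z hz
    have hmat : LinearMap.toMatrix (EuclideanSpace.basisFun (Fin n) ℝ).toBasis
        (EuclideanSpace.basisFun (Fin n) ℝ).toBasis (fderiv ℝ X z : _ →ₗ[ℝ] _) = DX z := by
      ext p q
      rw [LinearMap.toMatrix_apply, OrthonormalBasis.coe_toBasis,
        EuclideanSpace.basisFun_apply, OrthonormalBasis.coe_toBasis_repr_apply,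
        EuclideanSpace.basisFun_repr, hDX z hz p q]
      rfl
    have h2 := LinearMap.det_toMatrix (EuclideanSpace.basisFun (Fin n) ℝ).toBasis
      ((fderiv ℝ X z : EuclideanSpace ℝ (Fin n) →ₗ[ℝ] EuclideanSpace ℝ (Fin n)))
    rw [hmat] at h2
    exact h2.symm
  -- change of variables
  have himg : X '' Ω₁ = Ω₂ := by
    apply subset_antisymm (Set.image_subset_iff.2 hXmaps)
    intro y hy
    exact ⟨Xinv y, hXinvmaps hy, hright y hy⟩
  have hinj : Set.InjOn X Ω₁ := fun a ha b hb hab => by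
    rw [← hleft a ha, hab, hleft b hb]
  rw [← himg, integral_image_eq_integral_abs_det_fderiv_smul volume hΩ₁.measurableSet
    (fun z hz => ((hXd z hz).hasFDerivAt).hasFDerivWithinAt) hinj]
  refine setIntegral_congr_fun hΩ₁.measurableSet fun x hx => ?_
  -- ==================== pointwise identity ====================
  have hy : X x ∈ Ω₂ := hXmaps hx
  -- gradient part
  have hgrad : ‖gradient (u ∘ Xinv) (X x)‖ ^ 2
      = ∑ i, (fderiv ℝ (u ∘ Xinv) (X x) (EuclideanSpace.single i 1)) ^ 2 :=
    norm_gradient_sq (hvd _ hy)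
  have hsigma : ((fun i => fderiv ℝ u x (EuclideanSpace.single i 1)) ⬝ᵥ
        (A x).mulVec (fun j => fderiv ℝ u x (EuclideanSpace.single j 1)))
      = |(DX x).det| * ∑ i, (fderiv ℝ (u ∘ Xinv) (X x) (EuclideanSpace.single i 1)) ^ 2 := by
    rw [hA x hx, hMinv x hx, quad_form_eq]
    congr 1
    exact Finset.sum_congr rfl fun i _ => by rw [← hw x hx i]
  -- Laplacian/divergence part
  have hdiv : (∑ i, fderiv ℝ
        (fun z => (A z).mulVec (fun j => fderiv ℝ u z (EuclideanSpace.single j 1)) i)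
        x (EuclideanSpace.single i 1))
      = (if 0 < (DX x).det then (1:ℝ) else -1) * ((DX x).det *
          (∑ i, fderiv ℝ (fun z => fderiv ℝ (u ∘ Xinv) z (EuclideanSpace.single i 1)) (X x)
            (EuclideanSpace.single i 1))) := by
    have hfC1 : ContDiffOn ℝ 1 (fderiv ℝ X) Ω₁ := hX.fderiv_of_isOpen hΩ₁ (by norm_num)
    have hfd1 : DifferentiableAt ℝ (fderiv ℝ X) x :=
      (hfC1.contDiffAt (hΩ₁.mem_nhds hx)).differentiableAt one_ne_zero
    have hgd : ∀ p q : Fin n, DifferentiableAt ℝ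
        (fun z => fderiv ℝ X z (EuclideanSpace.single q 1) p) x := by
      intro p q
      have h2 : DifferentiableAt ℝ (fun z => fderiv ℝ X z (EuclideanSpace.single q 1)) x :=
        hfd1.clm_apply (differentiableAt_const _)
      exact ((EuclideanSpace.proj p : EuclideanSpace ℝ (Fin n) →L[ℝ] ℝ).differentiableAt).comp x h2
    have hDXentry_ev : ∀ p q : Fin n, (fun z => DX z p q)
        =ᶠ[nhds x] (fun z => fderiv ℝ X z (EuclideanSpace.single q 1) p) :=
      fun p q => Filter.eventuallyEq_of_mem (hΩ₁.mem_nhds hx) fun z hz => hDX z hz p q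
    have hDXd : ∀ p q : Fin n, DifferentiableAt ℝ (fun z => DX z p q) x :=
      fun p q => (hDXentry_ev p q).symm.differentiableAt_iff.1 (hgd p q)
    have hf' : ∀ p q : Fin n, HasFDerivAt (fun z => DX z p q)
        (fderiv ℝ (fun z => DX z p q) x) x := fun p q => (hDXd p q).hasFDerivAt
    -- symmetry of second derivatives
    have hsymm : ∀ p q i : Fin n,
        fderiv ℝ (fun z => DX z p q) x (EuclideanSpace.single i 1)
          = fderiv ℝ (fun z => DX z p i) x (EuclideanSpace.single q 1) := by
      have hX2 : IsSymmSndFDerivAt ℝ X x :=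
        (hX.contDiffAt (hΩ₁.mem_nhds hx)).isSymmSndFDerivAt (by simp)
      have e2 : ∀ p q i : Fin n,
          fderiv ℝ (fun z => fderiv ℝ X z (EuclideanSpace.single q 1) p) x
              (EuclideanSpace.single i 1)
            = (fderiv ℝ (fderiv ℝ X) x (EuclideanSpace.single i 1)
                (EuclideanSpace.single q 1)) p := by
        intro p q i
        have h2 : DifferentiableAt ℝ (fun z => fderiv ℝ X z (EuclideanSpace.single q 1)) x :=
          hfd1.clm_apply (differentiableAt_const _)
        have h3 : fderiv ℝ (fun z => fderiv ℝ X z (EuclideanSpace.single q 1)) x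
            = (fderiv ℝ (fderiv ℝ X) x).flip (EuclideanSpace.single q 1) := by
          rw [fderiv_clm_apply hfd1 (differentiableAt_const _)]
          simp
        have h4 : HasFDerivAt (fun z => fderiv ℝ X z (EuclideanSpace.single q 1) p)
            ((EuclideanSpace.proj p : EuclideanSpace ℝ (Fin n) →L[ℝ] ℝ).comp
              (fderiv ℝ (fun z => fderiv ℝ X z (EuclideanSpace.single q 1)) x)) x :=
          ((EuclideanSpace.proj p : EuclideanSpace ℝ (Fin n) →L[ℝ] ℝ).hasFDerivAt).comp x
            h2.hasFDerivAt
        rw [h4.fderiv, h3]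
        rfl
      intro p q i
      rw [(hDXentry_ev p q).fderiv_eq, (hDXentry_ev p i).fderiv_eq, e2, e2, hX2]
    -- Piola identity
    have hpiola : ∀ j, ∑ i, fderiv ℝ (fun z => (DX z).adjugate i j) x
        (EuclideanSpace.single i 1) = 0 :=
      fun j => piola hf' (fun i => EuclideanSpace.single i 1) hsymm j
    -- second derivatives of u ∘ Xinv
    have hvC1 : ContDiffOn ℝ 1 (fderiv ℝ (u ∘ Xinv)) Ω₂ := hv.fderiv_of_isOpen hΩ₂ (by norm_num)
    have hphi : ∀ j : Fin n, DifferentiableAt ℝ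
        (fun y' => fderiv ℝ (u ∘ Xinv) y' (EuclideanSpace.single j 1)) (X x) := fun j =>
      ((hvC1.contDiffAt (hΩ₂.mem_nhds hy)).differentiableAt one_ne_zero).clm_apply
        (differentiableAt_const _)
    have hwd : ∀ j : Fin n, DifferentiableAt ℝ
        (fun z => fderiv ℝ (u ∘ Xinv) (X z) (EuclideanSpace.single j 1)) x := fun j =>
      ((hphi j).comp x (hXd x hx))
    have hwderiv : ∀ j i : Fin n,
        fderiv ℝ (fun z => fderiv ℝ (u ∘ Xinv) (X z) (EuclideanSpace.single j 1)) x
            (EuclideanSpace.single i 1)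
          = ∑ k, DX x k i * (fderiv ℝ (fun y' => fderiv ℝ (u ∘ Xinv) y'
              (EuclideanSpace.single j 1)) (X x) (EuclideanSpace.single k 1)) := by
      intro j i
      have h5 : fderiv ℝ (fun z => fderiv ℝ (u ∘ Xinv) (X z) (EuclideanSpace.single j 1)) x
          = (fderiv ℝ (fun y' => fderiv ℝ (u ∘ Xinv) y' (EuclideanSpace.single j 1))
              (X x)).comp (fderiv ℝ X x) :=
        fderiv_comp x (hphi j) (hXd x hx)
      rw [h5, ContinuousLinearMap.comp_apply, clm_apply_eq_sum']
      exact Finset.sum_congr rfl fun k _ => by rw [hDX x hx k i]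
    -- sign is locally constant
    have hdetc : ContinuousAt (fun z => (DX z).det) x := by
      have hc1 : ContinuousAt (fun z => Matrix.of fun p q =>
          fderiv ℝ X z (EuclideanSpace.single q 1) p) x := by
        refine continuousAt_pi.2 ?_
        intro p
        rw [continuousAt_pi]
        intro q
        exact (hgd p q).continuousAt
      have hc2 : ContinuousAt (fun z => (Matrix.of fun p q =>
          fderiv ℝ X z (EuclideanSpace.single q 1) p).det) x :=
        (continuous_id.matrix_det.continuousAt).comp hc1
      apply hc2.congr
      filter_upwards [hΩ₁.mem_nhds hx] with z hz
      congr 1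
      ext p q
      exact (hDX z hz p q).symm
    have hsev : ∀ᶠ z in nhds x, |(DX z).det|
        = (if 0 < (DX x).det then (1:ℝ) else -1) * (DX z).det := by
      rcases lt_or_gt_of_ne (hdetz x hx) with h | h
      · have hev : ∀ᶠ z in nhds x, (DX z).det < 0 :=
          hdetc.eventually_mem (Iio_mem_nhds h)
        filter_upwards [hev] with z hz
        rw [abs_of_neg hz, if_neg (not_lt.2 h.le)]
        ring
      · have hev : ∀ᶠ z in nhds x, 0 < (DX z).det :=
          hdetc.eventually_mem (Ioi_mem_nhds h)
        filter_upwards [hev] with z hz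
        rw [abs_of_pos hz, if_pos h]
        ring
    -- the integrand agrees near x with s * (adjugate ⬝ w)
    have hAev : ∀ i : Fin n,
        (fun z => (A z).mulVec (fun j => fderiv ℝ u z (EuclideanSpace.single j 1)) i)
          =ᶠ[nhds x] (fun z => (if 0 < (DX x).det then (1:ℝ) else -1) *
            ∑ j, (DX z).adjugate i j * fderiv ℝ (u ∘ Xinv) (X z)
              (EuclideanSpace.single j 1)) := by
      intro i
      have hΩev : ∀ᶠ z in nhds x, z ∈ Ω₁ :=
        Filter.eventually_of_mem (hΩ₁.mem_nhds hx) fun z hz => hz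
      filter_upwards [hsev, hΩev] with z hz hzΩ
      rw [hA z hzΩ, hMinv z hzΩ, hz]
      have h6 : (((if 0 < (DX x).det then (1:ℝ) else -1) * (DX z).det) • (Mm z * (Mm z)ᵀ)).mulVec
            (fun j => fderiv ℝ u z (EuclideanSpace.single j 1))
          = (if 0 < (DX x).det then (1:ℝ) else -1) • ((DX z).adjugate.mulVec
            (fun j => fderiv ℝ (u ∘ Xinv) (X z) (EuclideanSpace.single j 1))) := by
        rw [hadjeq z hzΩ, ← smul_smul, Matrix.smul_mulVec, Matrix.smul_mulVec]
        congr 1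
        rw [Matrix.smul_mulVec]
        congr 1
        have hqw : ((Mm z)ᵀ *ᵥ fun j => fderiv ℝ u z (EuclideanSpace.single j 1))
            = fun j => fderiv ℝ (u ∘ Xinv) (X z) (EuclideanSpace.single j 1) := by
          funext j
          rw [hw z hzΩ j]
          simp only [Matrix.mulVec, dotProduct, Matrix.transpose_apply]
        rw [← Matrix.mulVec_mulVec, hqw]
      rw [h6]
      simp [Matrix.mulVec, dotProduct]
    have hadjd : ∀ i j : Fin n, DifferentiableAt ℝ (fun z => (DX z).adjugate i j) x :=
      fun i j => adjugate_entry_differentiable hf' i j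
    -- derivative of each component
    have hterm : ∀ i : Fin n,
        fderiv ℝ (fun z => (A z).mulVec (fun j => fderiv ℝ u z (EuclideanSpace.single j 1)) i)
            x (EuclideanSpace.single i 1)
          = (if 0 < (DX x).det then (1:ℝ) else -1) *
              ∑ j, (fderiv ℝ (fun z => (DX z).adjugate i j) x (EuclideanSpace.single i 1) *
                  fderiv ℝ (u ∘ Xinv) (X x) (EuclideanSpace.single j 1)
                + (DX x).adjugate i j *
                  fderiv ℝ (fun z => fderiv ℝ (u ∘ Xinv) (X z) (EuclideanSpace.single j 1)) x
                    (EuclideanSpace.single i 1)) := by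
      intro i
      rw [(hAev i).fderiv_eq]
      have hsum : HasFDerivAt (fun z => ∑ j, (DX z).adjugate i j *
            fderiv ℝ (u ∘ Xinv) (X z) (EuclideanSpace.single j 1))
          (∑ j, ((fun z => (DX z).adjugate i j) x •
              fderiv ℝ (fun z => fderiv ℝ (u ∘ Xinv) (X z) (EuclideanSpace.single j 1)) x
            + (fderiv ℝ (u ∘ Xinv) (X x) (EuclideanSpace.single j 1)) •
              fderiv ℝ (fun z => (DX z).adjugate i j) x)) x := by
        apply HasFDerivAt.fun_sum
        intro j _
        exact ((hadjd i j).hasFDerivAt).mul ((hwd j).hasFDerivAt)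
      rw [fderiv_const_mul hsum.differentiableAt]
      rw [ContinuousLinearMap.smul_apply, smul_eq_mul]
      congr 1
      rw [hsum.fderiv, ContinuousLinearMap.sum_apply]
      refine Finset.sum_congr rfl fun j _ => ?_
      simp only [ContinuousLinearMap.add_apply, ContinuousLinearMap.smul_apply, smul_eq_mul]
      ring
    -- assemble
    rw [Finset.sum_congr rfl fun i _ => hterm i, ← Finset.mul_sum]
    congr 1
    rw [Finset.sum_comm]
    have hsplit : ∀ j : Fin n, (∑ i, (fderiv ℝ (fun z => (DX z).adjugate i j) x
            (EuclideanSpace.single i 1) * fderiv ℝ (u ∘ Xinv) (X x) (EuclideanSpace.single j 1)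
          + (DX x).adjugate i j *
            fderiv ℝ (fun z => fderiv ℝ (u ∘ Xinv) (X z) (EuclideanSpace.single j 1)) x
              (EuclideanSpace.single i 1)))
        = ∑ i, (DX x).adjugate i j *
            fderiv ℝ (fun z => fderiv ℝ (u ∘ Xinv) (X z) (EuclideanSpace.single j 1)) x
              (EuclideanSpace.single i 1) := by
      intro j
      rw [Finset.sum_add_distrib, ← Finset.sum_mul, hpiola j, zero_mul, zero_add]
    rw [Finset.sum_congr rfl fun j _ => hsplit j]
    -- trace identity
    have htrace : ∀ j : Fin n, (∑ i, (DX x).adjugate i j *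
          fderiv ℝ (fun z => fderiv ℝ (u ∘ Xinv) (X z) (EuclideanSpace.single j 1)) x
            (EuclideanSpace.single i 1))
        = (DX x).det * fderiv ℝ (fun y' => fderiv ℝ (u ∘ Xinv) y' (EuclideanSpace.single j 1))
            (X x) (EuclideanSpace.single j 1) := by
      intro j
      calc (∑ i, (DX x).adjugate i j *
            fderiv ℝ (fun z => fderiv ℝ (u ∘ Xinv) (X z) (EuclideanSpace.single j 1)) x
              (EuclideanSpace.single i 1))
          = ∑ i, ∑ k, (DX x k i * (DX x).adjugate i j) *
              (fderiv ℝ (fun y' => fderiv ℝ (u ∘ Xinv) y' (EuclideanSpace.single j 1)) (X x)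
                (EuclideanSpace.single k 1)) := by
            refine Finset.sum_congr rfl fun i _ => ?_
            rw [hwderiv j i, Finset.mul_sum]
            exact Finset.sum_congr rfl fun k _ => by ring
        _ = ∑ k, (∑ i, DX x k i * (DX x).adjugate i j) *
              (fderiv ℝ (fun y' => fderiv ℝ (u ∘ Xinv) y' (EuclideanSpace.single j 1)) (X x)
                (EuclideanSpace.single k 1)) := by
            rw [Finset.sum_comm]
            exact Finset.sum_congr rfl fun k _ => by rw [Finset.sum_mul]
        _ = ∑ k, ((DX x * (DX x).adjugate) k j) *
              (fderiv ℝ (fun y' => fderiv ℝ (u ∘ Xinv) y' (EuclideanSpace.single j 1)) (X x)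
                (EuclideanSpace.single k 1)) := by
            refine Finset.sum_congr rfl fun k _ => ?_
            rw [Matrix.mul_apply]
        _ = (DX x).det * fderiv ℝ (fun y' => fderiv ℝ (u ∘ Xinv) y' (EuclideanSpace.single j 1))
              (X x) (EuclideanSpace.single j 1) := by
            rw [Matrix.mul_adjugate]
            rw [Finset.sum_eq_single j]
            · simp
            · intro k _ hkj
              simp [Matrix.one_apply, hkj]
            · intro hj
              exact absurd (Finset.mem_univ j) hj
    rw [Finset.sum_congr rfl fun j _ => htrace j, ← Finset.mul_sum]

  -- final arithmetic
  have habs : |(fderiv ℝ X x).det| = |(DX x).det| := by rw [hdet_transfer x hx]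
  rw [smul_eq_mul, habs, hdiv, hsigma, hgrad]
  set d := (DX x).det with hd
  set s := (if 0 < d then (1:ℝ) else -1) with hs
  have hd0 : d ≠ 0 := hdetz x hx
  have hsd : s * d = |d| := by
    rcases lt_or_gt_of_ne hd0 with h | h
    · rw [hs, if_neg (not_lt.2 h.le), abs_of_neg h]; ring
    · rw [hs, if_pos h, abs_of_pos h]; ring
  have habs0 : |d| ≠ 0 := abs_ne_zero.2 hd0
  set L := ∑ i, fderiv ℝ (fun z => fderiv ℝ (u ∘ Xinv) z (EuclideanSpace.single i 1)) (X x)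
      (EuclideanSpace.single i 1) with hL
  set G := ∑ i, (fderiv ℝ (u ∘ Xinv) (X x) (EuclideanSpace.single i 1)) ^ 2 with hG
  have : (s * (d * L)) ^ 2 = (|d| * L) ^ 2 := by rw [← hsd]; ring
  rw [this]
  field_simp
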